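/- With c_4 as in Proposition 4.2, c_4(θ_1 ∧ α_1(φ_1) ⊗ θ_2) = 0 for all θ_1 ∈ M_1, φ_1 ∈ K_1, θ_2 ∈ M_2; i.e., c_4 vanishes on M_1 ∧ α_1(K_1) ⊗ M_2. -/
import Mathlib

/-- Proposition 4.3, first item: With
`c₄(θ∧θ'⊗θ₂) = β₁(θ')β₃(θ·θ₂) - β₁(θ)β₃(θ'·θ₂) - β₂(θ∧θ')β₂(θ₂)`
and `α, β` as in Setup 2.7, `c₄` vanishes on `M₁ ∧ α₁(K₁) ⊗ M₂`:
`c₄(θ₁ ∧ α₁(φ₁) ⊗ θ₂) = 0` for all `θ₁ ∈ M₁`, `φ₁ ∈ K₁`, `θ₂ ∈ M₂`. -/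
theorem stmt14
    {R : Type*} [CommRing R]
    {K1 K2 K3 M1 M2 M3 M4 : Type*}
    [AddCommGroup K1] [AddCommGroup K2] [AddCommGroup K3]
    [AddCommGroup M1] [AddCommGroup M2] [AddCommGroup M3] [AddCommGroup M4]
    [Module R K1] [Module R K2] [Module R K3]
    [Module R M1] [Module R M2] [Module R M3] [Module R M4]
    -- differentials of the Koszul complex K (K₀ = R) and of M (M₀ = R)
    (k1 : K1 →ₗ[R] R) (k2 : K2 →ₗ[R] K1) (k3 : K3 →ₗ[R] K2)
    (m1 : M1 →ₗ[R] R) (m2 : M2 →ₗ[R] M1) (m3 : M3 →ₗ[R] M2) (m4 : M4 →ₗ[R] M3)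
    -- graded multiplications on K and on M
    (kmul11 : K1 →ₗ[R] K1 →ₗ[R] K2) (kmul12 : K1 →ₗ[R] K2 →ₗ[R] K3)
    (mmul11 : M1 →ₗ[R] M1 →ₗ[R] M2) (mmul12 : M1 →ₗ[R] M2 →ₗ[R] M3)
    (mmul13 : M1 →ₗ[R] M3 →ₗ[R] M4) (mmul22 : M2 →ₗ[R] M2 →ₗ[R] M4)
    -- orientations [-]_K and [-]_M
    (ωK : K3 ≃ₗ[R] R) (ωM : M4 ≃ₗ[R] R)
    -- the comparison morphism α : K → M (α₀ = id_R)
    (α1 : K1 →ₗ[R] M1) (α2 : K2 →ₗ[R] M2) (α3 : K3 →ₗ[R] M3)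
    -- the duality map β : M → K[-1]
    (β1 : M1 →ₗ[R] R) (β2 : M2 →ₗ[R] K1) (β3 : M3 →ₗ[R] K2) (β4 : M4 →ₗ[R] K3)
    -- β∘α = 0 and β(α(φ)·θ) = φ·β(θ) (Proposition 3.1), graded commutativity
    (hβα1 : ∀ φ : K1, β1 (α1 φ) = 0)
    (hβmix11 : ∀ (φ : K1) (θ : M1), β2 (mmul11 (α1 φ) θ) = β1 θ • φ)
    (hβmix12 : ∀ (φ : K1) (θ : M2), β3 (mmul12 (α1 φ) θ) = kmul11 φ (β2 θ))
    (hM11comm : ∀ x y : M1, mmul11 x y = - mmul11 y x)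
    (hK11comm : ∀ x y : K1, kmul11 x y = - kmul11 y x) :
    ∀ (θ : M1) (φ : K1) (θ2 : M2),
      β1 (α1 φ) • β3 (mmul12 θ θ2) - β1 θ • β3 (mmul12 (α1 φ) θ2)
        - kmul11 (β2 (mmul11 θ (α1 φ))) (β2 θ2) = 0 := by
  intro θ φ θ2
  rw [hβα1, hβmix12, hM11comm θ (α1 φ)]
  simp [hβmix11]
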